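/- (Combinatorial core of the O(n + m^{5/3}) butterfly complexity bound.) There exists a constant C > 0 such that for every natural number L, Σ_{ℓ=0}^{L} 4^ℓ · Σ_{k=1}^{4^{L−ℓ}} min( (16:ℝ)^ℓ, (k:ℝ) ) ≤ C · 4^{(5/3)·L}. -/

import Mathlib

open Finset

theorem stmt16 :
    ∃ C : ℝ, 0 < C ∧
      ∀ L : ℕ,
        ∑ ℓ ∈ Finset.range (L + 1),
            (4 : ℝ) ^ ℓ * ∑ k ∈ Finset.Icc (1 : ℕ) (4 ^ (L - ℓ)), min ((16 : ℝ) ^ ℓ) (k : ℝ) ≤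
          C * (4 : ℝ) ^ ((5 / 3 : ℝ) * (L : ℝ)) := by
  refine ⟨3, by norm_num, fun L => ?_⟩
  set m := L / 3 with hm
  have h3m : 3 * m ≤ L := by omega
  have hL3 : L < 3 * (m + 1) := by omega
  set R : ℝ := (4 : ℝ) ^ ((5 / 3 : ℝ) * (L : ℝ)) with hR
  have hRpos : 0 < R := Real.rpow_pos_of_pos (by norm_num) _
  -- pointwise bound on each term
  have key : ∀ ℓ ∈ range (L + 1),
      (4 : ℝ) ^ ℓ * ∑ k ∈ Finset.Icc (1 : ℕ) (4 ^ (L - ℓ)), min ((16 : ℝ) ^ ℓ) (k : ℝ)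
        ≤ min ((4 : ℝ) ^ (L + 2 * ℓ)) ((4 : ℝ) ^ (2 * L) * (1 / 4 : ℝ) ^ ℓ) := by
    intro ℓ hℓ
    rw [mem_range] at hℓ
    have hℓL : ℓ ≤ L := Nat.lt_succ_iff.mp hℓ
    set N : ℕ := 4 ^ (L - ℓ) with hN
    have inner : ∑ k ∈ Finset.Icc (1 : ℕ) N, min ((16 : ℝ) ^ ℓ) (k : ℝ)
        ≤ (N : ℝ) * min ((16 : ℝ) ^ ℓ) (N : ℝ) := by
      have hcard : (Finset.Icc (1 : ℕ) N).card = N := by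
        rw [Nat.card_Icc]; exact Nat.add_sub_cancel ..
      calc ∑ k ∈ Finset.Icc (1 : ℕ) N, min ((16 : ℝ) ^ ℓ) (k : ℝ)
          ≤ ∑ _k ∈ Finset.Icc (1 : ℕ) N, min ((16 : ℝ) ^ ℓ) (N : ℝ) := by
            refine Finset.sum_le_sum fun k hk => ?_
            rw [Finset.mem_Icc] at hk
            exact min_le_min le_rfl (by exact_mod_cast hk.2)
        _ = (N : ℝ) * min ((16 : ℝ) ^ ℓ) (N : ℝ) := by
            rw [Finset.sum_const, hcard, nsmul_eq_mul]
    have h4pos : (0 : ℝ) ≤ (4 : ℝ) ^ ℓ := by positivity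
    calc (4 : ℝ) ^ ℓ * ∑ k ∈ Finset.Icc (1 : ℕ) N, min ((16 : ℝ) ^ ℓ) (k : ℝ)
        ≤ (4 : ℝ) ^ ℓ * ((N : ℝ) * min ((16 : ℝ) ^ ℓ) (N : ℝ)) :=
          mul_le_mul_of_nonneg_left inner h4pos
      _ = min ((4 : ℝ) ^ ℓ * (N : ℝ) * (16 : ℝ) ^ ℓ) ((4 : ℝ) ^ ℓ * (N : ℝ) * (N : ℝ)) := by
          rw [← mul_assoc, mul_min_of_nonneg _ _ (by positivity)]
      _ = min ((4 : ℝ) ^ (L + 2 * ℓ)) ((4 : ℝ) ^ (2 * L) * (1 / 4 : ℝ) ^ ℓ) := by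
          have hNval : (N : ℝ) = (4 : ℝ) ^ (L - ℓ) := by
            rw [hN]; push_cast; ring
          congr 1
          · rw [hNval, ← pow_add]
            have h16 : (16 : ℝ) ^ ℓ = (4 : ℝ) ^ (2 * ℓ) := by
              rw [pow_mul]; norm_num
            rw [h16, ← pow_add]
            congr 1
            omega
          · have h14 : (1 / 4 : ℝ) ^ ℓ = 1 / (4 : ℝ) ^ ℓ := by
              rw [div_pow, one_pow]
            rw [hNval, ← pow_add, ← pow_add, h14, mul_one_div,
              eq_div_iff (by positivity : ((4 : ℝ) ^ ℓ) ≠ 0), ← pow_add]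
            congr 1
            omega
  have total : ∑ ℓ ∈ range (L + 1),
      (4 : ℝ) ^ ℓ * ∑ k ∈ Finset.Icc (1 : ℕ) (4 ^ (L - ℓ)), min ((16 : ℝ) ^ ℓ) (k : ℝ)
      ≤ ∑ ℓ ∈ range (L + 1),
        min ((4 : ℝ) ^ (L + 2 * ℓ)) ((4 : ℝ) ^ (2 * L) * (1 / 4 : ℝ) ^ ℓ) :=
    Finset.sum_le_sum key
  have hsplit : ∑ ℓ ∈ range (L + 1),
      min ((4 : ℝ) ^ (L + 2 * ℓ)) ((4 : ℝ) ^ (2 * L) * (1 / 4 : ℝ) ^ ℓ)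
      = ∑ ℓ ∈ Finset.Ico 0 (m + 1),
          min ((4 : ℝ) ^ (L + 2 * ℓ)) ((4 : ℝ) ^ (2 * L) * (1 / 4 : ℝ) ^ ℓ)
        + ∑ ℓ ∈ Finset.Ico (m + 1) (L + 1),
          min ((4 : ℝ) ^ (L + 2 * ℓ)) ((4 : ℝ) ^ (2 * L) * (1 / 4 : ℝ) ^ ℓ) := by
    rw [range_eq_Ico, ← Finset.sum_Ico_consecutive _ (Nat.zero_le (m + 1)) (by omega)]
  -- first piece
  have hS1 : ∑ ℓ ∈ Finset.Ico 0 (m + 1),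
      min ((4 : ℝ) ^ (L + 2 * ℓ)) ((4 : ℝ) ^ (2 * L) * (1 / 4 : ℝ) ^ ℓ)
      ≤ (16 / 15 : ℝ) * R := by
    have step1 : ∑ ℓ ∈ Finset.Ico 0 (m + 1),
        min ((4 : ℝ) ^ (L + 2 * ℓ)) ((4 : ℝ) ^ (2 * L) * (1 / 4 : ℝ) ^ ℓ)
        ≤ ∑ ℓ ∈ Finset.Ico 0 (m + 1), (4 : ℝ) ^ L * (16 : ℝ) ^ ℓ := by
      refine Finset.sum_le_sum fun ℓ _ => ?_
      refine le_trans (min_le_left _ _) (le_of_eq ?_)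
      rw [pow_add, pow_mul]
      norm_num
    have geom : ∑ ℓ ∈ Finset.Ico 0 (m + 1), (16 : ℝ) ^ ℓ
        = ((16 : ℝ) ^ (m + 1) - 1) / 15 := by
      rw [← range_eq_Ico, geom_sum_eq (by norm_num)]
      norm_num
    have hpow : (4 : ℝ) ^ L * (16 : ℝ) ^ (m + 1) = 16 * (4 : ℝ) ^ (L + 2 * m) := by
      have : (16 : ℝ) ^ (m + 1) = 16 * (4 : ℝ) ^ (2 * m) := by
        rw [pow_succ, pow_mul]; ring_nf
      rw [this, pow_add]; ring
    have hrpow : (4 : ℝ) ^ (L + 2 * m) ≤ R := by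
      rw [hR, ← Real.rpow_natCast (4 : ℝ) (L + 2 * m)]
      refine Real.rpow_le_rpow_of_exponent_le (by norm_num) ?_
      push_cast
      have : (3 * m : ℝ) ≤ (L : ℝ) := by exact_mod_cast h3m
      linarith
    calc ∑ ℓ ∈ Finset.Ico 0 (m + 1),
          min ((4 : ℝ) ^ (L + 2 * ℓ)) ((4 : ℝ) ^ (2 * L) * (1 / 4 : ℝ) ^ ℓ)
        ≤ ∑ ℓ ∈ Finset.Ico 0 (m + 1), (4 : ℝ) ^ L * (16 : ℝ) ^ ℓ := step1
      _ = (4 : ℝ) ^ L * (((16 : ℝ) ^ (m + 1) - 1) / 15) := by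
          rw [← Finset.mul_sum, geom]
      _ ≤ (4 : ℝ) ^ L * ((16 : ℝ) ^ (m + 1) / 15) := by
          refine mul_le_mul_of_nonneg_left ?_ (by positivity)
          linarith
      _ = (16 / 15 : ℝ) * (4 : ℝ) ^ (L + 2 * m) := by
          rw [mul_div_assoc'] at *
          field_simp
          linarith [hpow]
      _ ≤ (16 / 15 : ℝ) * R := by
          refine mul_le_mul_of_nonneg_left hrpow (by norm_num)
  -- second piece
  have hS2 : ∑ ℓ ∈ Finset.Ico (m + 1) (L + 1),
      min ((4 : ℝ) ^ (L + 2 * ℓ)) ((4 : ℝ) ^ (2 * L) * (1 / 4 : ℝ) ^ ℓ)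
      ≤ (4 / 3 : ℝ) * R := by
    have step1 : ∑ ℓ ∈ Finset.Ico (m + 1) (L + 1),
        min ((4 : ℝ) ^ (L + 2 * ℓ)) ((4 : ℝ) ^ (2 * L) * (1 / 4 : ℝ) ^ ℓ)
        ≤ ∑ ℓ ∈ Finset.Ico (m + 1) (L + 1), (4 : ℝ) ^ (2 * L) * (1 / 4 : ℝ) ^ ℓ :=
      Finset.sum_le_sum fun ℓ _ => min_le_right _ _
    have geom : ∑ ℓ ∈ Finset.Ico (m + 1) (L + 1), (1 / 4 : ℝ) ^ ℓ
        ≤ (4 / 3 : ℝ) * (1 / 4 : ℝ) ^ (m + 1) := by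
      rcases le_or_gt (m + 1) (L + 1) with h | h
      · rw [geom_sum_Ico (by norm_num : (1 / 4 : ℝ) ≠ 1) h]
        have h1 : (0 : ℝ) ≤ (1 / 4 : ℝ) ^ (L + 1) := by positivity
        rw [div_le_iff_of_neg (by norm_num : (1 / 4 : ℝ) - 1 < 0)]
        ring_nf
        nlinarith [pow_nonneg (by norm_num : (0:ℝ) ≤ 1/4) L,
          pow_nonneg (by norm_num : (0:ℝ) ≤ 1/4) m]
      · rw [Finset.Ico_eq_empty (by omega), Finset.sum_empty]
        positivity
    have hrpow : (4 : ℝ) ^ (2 * L) * (1 / 4 : ℝ) ^ (m + 1) ≤ R := by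
      have h14 : (1 / 4 : ℝ) ^ (m + 1) = ((4 : ℝ) ^ (m + 1))⁻¹ := by
        rw [div_pow, one_pow, one_div]
      rw [h14, hR, ← Real.rpow_natCast (4 : ℝ) (2 * L),
        ← Real.rpow_natCast (4 : ℝ) (m + 1), ← Real.rpow_neg (by norm_num),
        ← Real.rpow_add (by norm_num)]
      refine Real.rpow_le_rpow_of_exponent_le (by norm_num) ?_
      push_cast
      have : (L : ℝ) < 3 * ((m : ℝ) + 1) := by exact_mod_cast hL3
      linarith
    calc ∑ ℓ ∈ Finset.Ico (m + 1) (L + 1),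
          min ((4 : ℝ) ^ (L + 2 * ℓ)) ((4 : ℝ) ^ (2 * L) * (1 / 4 : ℝ) ^ ℓ)
        ≤ ∑ ℓ ∈ Finset.Ico (m + 1) (L + 1), (4 : ℝ) ^ (2 * L) * (1 / 4 : ℝ) ^ ℓ := step1
      _ = (4 : ℝ) ^ (2 * L) * ∑ ℓ ∈ Finset.Ico (m + 1) (L + 1), (1 / 4 : ℝ) ^ ℓ := by
          rw [Finset.mul_sum]
      _ ≤ (4 : ℝ) ^ (2 * L) * ((4 / 3 : ℝ) * (1 / 4 : ℝ) ^ (m + 1)) :=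
          mul_le_mul_of_nonneg_left geom (by positivity)
      _ = (4 / 3 : ℝ) * ((4 : ℝ) ^ (2 * L) * (1 / 4 : ℝ) ^ (m + 1)) := by ring
      _ ≤ (4 / 3 : ℝ) * R := mul_le_mul_of_nonneg_left hrpow (by norm_num)
  calc ∑ ℓ ∈ range (L + 1),
        (4 : ℝ) ^ ℓ * ∑ k ∈ Finset.Icc (1 : ℕ) (4 ^ (L - ℓ)), min ((16 : ℝ) ^ ℓ) (k : ℝ)
      ≤ ∑ ℓ ∈ range (L + 1),
        min ((4 : ℝ) ^ (L + 2 * ℓ)) ((4 : ℝ) ^ (2 * L) * (1 / 4 : ℝ) ^ ℓ) := total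
    _ ≤ (16 / 15 : ℝ) * R + (4 / 3 : ℝ) * R := by rw [hsplit]; exact add_le_add hS1 hS2
    _ ≤ 3 * R := by linarith
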